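/- Let (X,d) be a finite metric space with X = A ∪ B, A and B nonempty, and let α > 0. Suppose φ_A : A → ℝ^a and φ_B : B → ℝ^b are non-contracting embeddings with ‖φ_A‖_Lip ≤ D_A and ‖φ_B‖_Lip ≤ D_B. Then there exists a map ψ : X → ℝ^b such that: (1) ‖ψ(a₁) − ψ(a₂)‖ ≤ 2·(1 + 1/α)·D_A·D_B·d(a₁,a₂) for all a₁,a₂ ∈ A; (2) d(b₁,b₂) ≤ ‖ψ(b₁) − ψ(b₂)‖ ≤ D_B·d(b₁,b₂) for all b₁,b₂ ∈ B; and (3) for all a ∈ A and b ∈ B, d(a,b) − (1+α)·(2·D_A·D_B + 1)·R_a ≤ ‖ψ(a) − ψ(b)‖ ≤ (2·(1+α)·D_A·D_B + (2+α)·D_B)·d(a,b), where R_a = d(a,B). -/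

import Mathlib

section KirszbraunAux

open Finset Metric Filter Topology

local notation "⟪" x ", " y "⟫" => @inner ℝ _ _ x y

variable {F G : Type*} [NormedAddCommGroup F] [InnerProductSpace ℝ F]
  [NormedAddCommGroup G] [InnerProductSpace ℝ G] [FiniteDimensional ℝ G]


private lemma double_inner_sum {H : Type*} [NormedAddCommGroup H] [InnerProductSpace ℝ H]
    (J : Finset G) (c : G → ℝ) (v : G → H) :
    ∑ z ∈ J, ∑ z' ∈ J, c z * c z' * ⟪v z, v z'⟫ = ‖∑ z ∈ J, c z • v z‖ ^ 2 := by
  have h : ⟪∑ z ∈ J, c z • v z, ∑ z' ∈ J, c z' • v z'⟫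
      = ∑ z ∈ J, ∑ z' ∈ J, c z * c z' * ⟪v z, v z'⟫ := by
    rw [sum_inner]
    refine Finset.sum_congr rfl fun z hz => ?_
    rw [inner_sum]
    refine Finset.sum_congr rfl fun z' hz' => ?_
    rw [real_inner_smul_left, real_inner_smul_right]; ring
  rw [← h, real_inner_self_eq_norm_sq]

set_option maxHeartbeats 2000000 in
lemma kirszbraun_point (L : ℝ) (hL : 0 ≤ L) (S : Finset F) (f : F → G)
    (hf : ∀ p ∈ S, ∀ q ∈ S, dist (f p) (f q) ≤ L * dist p q) (x : F) :
    ∃ y : G, ∀ p ∈ S, dist y (f p) ≤ L * dist x p := by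
  classical
  rcases S.eq_empty_or_nonempty with rfl | hS
  · exact ⟨0, by simp⟩
  by_cases hx : x ∈ S
  · exact ⟨f x, fun p hp => hf x hx p hp⟩
  have hdx : ∀ p ∈ S, 0 < dist x p := fun p hp => dist_pos.2 fun h => hx (h ▸ hp)
  set g : G → ℝ := fun y => S.sup' hS fun p => dist y (f p) / dist x p with hgdef
  have hgle : ∀ y, ∀ p ∈ S, dist y (f p) ≤ g y * dist x p := by
    intro y p hp
    have h1 : dist y (f p) / dist x p ≤ g y :=
      Finset.le_sup' (fun p => dist y (f p) / dist x p) hp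
    exact (div_le_iff₀ (hdx p hp)).1 h1
  have hgcont : Continuous g := by
    refine continuous_iff_continuousAt.2 fun y => ?_
    exact ContinuousAt.finset_sup'_apply hS fun p hp =>
      ((continuous_id.dist continuous_const).div_const _).continuousAt
  have hgnonneg : ∀ y, 0 ≤ g y := by
    intro y
    obtain ⟨p, hp⟩ := hS
    exact le_trans (div_nonneg dist_nonneg dist_nonneg)
      (Finset.le_sup' (fun p => dist y (f p) / dist x p) hp)
  obtain ⟨p₀, hp₀⟩ := id hS
  set M := g (f p₀) with hM
  set ρ : ℝ := M * dist x p₀ + 1 with hρ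
  have hρpos : 0 ≤ ρ := by
    have : 0 ≤ M * dist x p₀ := mul_nonneg (hgnonneg _) dist_nonneg
    linarith
  -- minimizer of g
  obtain ⟨y₀, hy₀K, hy₀min⟩ := (isCompact_closedBall (f p₀) ρ).exists_isMinOn
    ⟨f p₀, mem_closedBall_self hρpos⟩ hgcont.continuousOn
  have hy₀glob : ∀ y, g y₀ ≤ g y := by
    intro y
    by_cases hy : y ∈ closedBall (f p₀) ρ
    · exact hy₀min hy
    · have h1 : ρ < dist y (f p₀) := by
        simpa [dist_comm] using not_le.1 fun h => hy (mem_closedBall.2 (by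
          simpa [dist_comm] using h))
      have h2 : g y₀ ≤ M := hy₀min (mem_closedBall_self hρpos)
      have h3 : dist y (f p₀) ≤ g y * dist x p₀ := hgle y p₀ hp₀
      nlinarith [hdx p₀ hp₀, hgnonneg y]
  set t := g y₀ with ht
  by_cases htL : t ≤ L
  · refine ⟨y₀, fun p hp => le_trans (hgle y₀ p hp) ?_⟩
    exact mul_le_mul_of_nonneg_right htL dist_nonneg
  push_neg at htL
  exfalso
  -- active set
  set I : Finset F := S.filter (fun p => dist y₀ (f p) = t * dist x p) with hI
  have hIS : I ⊆ S := Finset.filter_subset _ _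
  have hIne : I.Nonempty := by
    obtain ⟨pm, hpm, hpmax⟩ := Finset.exists_mem_eq_sup' hS
      (fun p => dist y₀ (f p) / dist x p)
    refine ⟨pm, Finset.mem_filter.2 ⟨hpm, ?_⟩⟩
    have h1 : t = dist y₀ (f pm) / dist x pm := hpmax
    rw [eq_div_iff (ne_of_gt (hdx pm hpm))] at h1
    linarith [h1]
  set J : Finset G := I.image f with hJ
  have hJne : J.Nonempty := hIne.image f
  -- preimage selector
  set pz : G → F := fun z => if h : ∃ p ∈ I, f p = z then h.choose else x with hpz
  have hpzI : ∀ z ∈ J, pz z ∈ I ∧ f (pz z) = z := by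
    intro z hz
    obtain ⟨p, hp, hfp⟩ := Finset.mem_image.1 hz
    have h : ∃ p ∈ I, f p = z := ⟨p, hp, hfp⟩
    simp only [hpz, dif_pos h]
    exact ⟨h.choose_spec.1, h.choose_spec.2⟩
  set r : G → ℝ := fun z => dist x (pz z) with hr
  have hrpos : ∀ z ∈ J, 0 < r z := fun z hz => hdx _ (hIS (hpzI z hz).1)
  have hdist_act : ∀ z ∈ J, dist y₀ z = t * r z := by
    intro z hz
    obtain ⟨h1, h2⟩ := hpzI z hz
    have h3 := (Finset.mem_filter.1 h1).2
    rw [h2] at h3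
    exact h3
  -- Step 1 : y₀ is in the convex hull of J
  have hy₀hull : y₀ ∈ convexHull ℝ (J : Set G) := by
    by_contra hy₀hull
    have hullne : (convexHull ℝ (J : Set G)).Nonempty :=
      (Finset.coe_nonempty.2 hJne).mono (subset_convexHull ℝ _)
    have hullcompact : IsCompact (convexHull ℝ (J : Set G)) :=
      (J : Set G).toFinite.isCompact_convexHull ℝ
    obtain ⟨v, hvK, hv⟩ := exists_norm_eq_iInf_of_complete_convex hullne
      hullcompact.isComplete (convex_convexHull ℝ _) y₀
    have hchar := (norm_eq_iInf_iff_real_inner_le_zero (convex_convexHull ℝ _) hvK).1 hv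
    set u := v - y₀ with hu
    have hune : 0 < ‖u‖ := by
      rw [norm_pos_iff]
      intro h
      apply hy₀hull
      have hveq : v = y₀ := by rwa [sub_eq_zero] at h
      rwa [← hveq]
    have hactive : ∀ z ∈ J, ‖u‖ ^ 2 ≤ ⟪z - y₀, u⟫ := by
      intro z hz
      have hzK : z ∈ convexHull ℝ (J : Set G) := subset_convexHull ℝ _ (by exact_mod_cast hz)
      have h1 : ⟪y₀ - v, z - v⟫ ≤ 0 := hchar z hzK
      have h2 : z - y₀ = (z - v) + u := by rw [hu]; abel
      rw [h2, inner_add_left]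
      have h3 : ⟪z - v, u⟫ = -⟪y₀ - v, z - v⟫ := by
        have h5 : u = -(y₀ - v) := by rw [hu]; abel
        rw [h5, inner_neg_right, real_inner_comm]
      have h4 : ⟪u, u⟫ = ‖u‖ ^ 2 := real_inner_self_eq_norm_sq u
      nlinarith [h1]
    -- moving towards v strictly decreases g
    have key : ∀ᶠ ε in 𝓝[>] (0:ℝ), ∀ p ∈ S, dist (y₀ + ε • u) (f p) / dist x p < t := by
      rw [Finset.eventually_all]
      intro p hp
      by_cases hpI : p ∈ I
      · -- active point
        have hzJ : f p ∈ J := Finset.mem_image_of_mem f hpI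
        have hact := hactive (f p) hzJ
        have hdy : dist y₀ (f p) = t * dist x p := (Finset.mem_filter.1 hpI).2
        filter_upwards [Ioo_mem_nhdsGT_of_mem (by norm_num : (0:ℝ) ∈ Set.Ico 0 2)]
        intro ε hε
        obtain ⟨hε0, hε2⟩ := hε
        have hsq : dist (y₀ + ε • u) (f p) ^ 2
            = dist y₀ (f p) ^ 2 + 2 * ε * ⟪y₀ - f p, u⟫ + ε ^ 2 * ‖u‖ ^ 2 := by
          rw [dist_eq_norm, dist_eq_norm]
          have : y₀ + ε • u - f p = (y₀ - f p) + ε • u := by abel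
          rw [this, norm_add_sq_real, real_inner_smul_right, norm_smul]
          simp [abs_of_nonneg (le_of_lt hε0), mul_pow]
          ring
        have hin : ⟪y₀ - f p, u⟫ ≤ -‖u‖ ^ 2 := by
          have : ⟪y₀ - f p, u⟫ = -⟪f p - y₀, u⟫ := by
            rw [← inner_neg_left]; congr 1; abel
          rw [this]; linarith [hact]
        have hlt : dist (y₀ + ε • u) (f p) ^ 2 < (t * dist x p) ^ 2 := by
          rw [hsq, ← hdy]
          nlinarith [mul_le_mul_of_nonneg_left hin (by positivity : (0:ℝ) ≤ 2 * ε),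
            mul_pos (mul_pos hε0 (show (0:ℝ) < 2 - ε by linarith)) (pow_pos hune 2)]
        have htp : 0 < t * dist x p := mul_pos (lt_of_le_of_lt hL htL) (hdx p hp)
        have : dist (y₀ + ε • u) (f p) < t * dist x p := by
          nlinarith [dist_nonneg (x := y₀ + ε • u) (y := f p)]
        exact (div_lt_iff₀ (hdx p hp)).2 this
      · -- inactive point
        have hle : dist y₀ (f p) / dist x p ≤ t :=
          Finset.le_sup' (fun p => dist y₀ (f p) / dist x p) hp
        have hne : dist y₀ (f p) ≠ t * dist x p := by
          intro h; exact hpI (Finset.mem_filter.2 ⟨hp, h⟩)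
        have hstrict : dist y₀ (f p) / dist x p < t := by
          rcases lt_or_eq_of_le hle with h | h
          · exact h
          · exact absurd ((div_eq_iff (ne_of_gt (hdx p hp))).1 h) hne
        have hcont : ContinuousAt (fun ε : ℝ => dist (y₀ + ε • u) (f p) / dist x p) 0 := by
          apply ContinuousAt.div_const
          exact ((continuous_const.add (continuous_id.smul continuous_const)).dist
            continuous_const).continuousAt
        have hT : Filter.Tendsto (fun ε : ℝ => dist (y₀ + ε • u) (f p) / dist x p)
            (𝓝 0) (𝓝 (dist y₀ (f p) / dist x p)) := by
          simpa using hcont.tendsto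
        have hev : ∀ᶠ ε in 𝓝 (0:ℝ), dist (y₀ + ε • u) (f p) / dist x p < t :=
          hT.eventually_lt_const hstrict
        exact hev.filter_mono nhdsWithin_le_nhds
    obtain ⟨ε, hεlt⟩ := key.exists
    have : g (y₀ + ε • u) < t := by
      rw [hgdef]
      exact (Finset.sup'_lt_iff hS).2 fun p hp => hεlt p hp
    exact absurd (hy₀glob (y₀ + ε • u)) (not_le.2 this)
  -- Step 2 : contradiction via the quadratic identity
  rw [Finset.convexHull_eq] at hy₀hull
  obtain ⟨w, hw0, hw1, hwc⟩ := hy₀hull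
  have hy₀eq : ∑ z ∈ J, w z • z = y₀ := by
    rw [← hwc, Finset.centerMass_eq_of_sum_1 _ _ hw1]
    simp
  have hsum0 : ∑ z ∈ J, w z • (z - y₀) = (0 : G) := by
    simp_rw [smul_sub]
    rw [Finset.sum_sub_distrib, hy₀eq, ← Finset.sum_smul, hw1, one_smul, sub_self]
  have e1 : ∑ z ∈ J, ∑ z' ∈ J, w z * w z' * ⟪z - y₀, z' - y₀⟫ = 0 := by
    rw [double_inner_sum J w (fun z => z - y₀), hsum0]
    simp
  have e2 : ∑ z ∈ J, ∑ z' ∈ J, w z * w z' * ⟪pz z - x, pz z' - x⟫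
      = ‖∑ z ∈ J, w z • (pz z - x)‖ ^ 2 :=
    double_inner_sum J w (fun z => pz z - x)
  have hpzS : ∀ z ∈ J, pz z ∈ S := fun z hz => hIS (hpzI z hz).1
  have hnormr : ∀ z ∈ J, ‖pz z - x‖ = r z := by
    intro z hz
    rw [hr]
    simp only [dist_eq_norm]
    rw [norm_sub_rev]
  have hterm : ∀ z ∈ J, ∀ z' ∈ J,
      w z * w z' * ((t ^ 2 - L ^ 2) * ((r z) ^ 2 + (r z') ^ 2) / 2
        + L ^ 2 * ⟪pz z - x, pz z' - x⟫)
      ≤ w z * w z' * ⟪z - y₀, z' - y₀⟫ := by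
    intro z hz z' hz'
    refine mul_le_mul_of_nonneg_left ?_ (mul_nonneg (hw0 z hz) (hw0 z' hz'))
    have hnz : ‖z - y₀‖ = t * r z := by
      rw [← dist_eq_norm, dist_comm, ← hdist_act z hz]
    have hnz' : ‖z' - y₀‖ = t * r z' := by
      rw [← dist_eq_norm, dist_comm, ← hdist_act z' hz']
    have hpolar := norm_sub_sq_real (z - y₀) (z' - y₀)
    have hzz'eq : z - y₀ - (z' - y₀) = z - z' := by abel
    rw [hzz'eq, hnz, hnz'] at hpolar
    have hfpz := hf (pz z) (hpzS z hz) (pz z') (hpzS z' hz')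
    rw [(hpzI z hz).2, (hpzI z' hz').2, dist_eq_norm, dist_eq_norm] at hfpz
    have hsq : ‖z - z'‖ ^ 2 ≤ (L * ‖pz z - pz z'‖) ^ 2 :=
      pow_le_pow_left₀ (norm_nonneg _) hfpz 2
    have hpolar2 := norm_sub_sq_real (pz z - x) (pz z' - x)
    have hpeq : pz z - x - (pz z' - x) = pz z - pz z' := by abel
    rw [hpeq, hnormr z hz, hnormr z' hz'] at hpolar2
    have h8 : (L * ‖pz z - pz z'‖) ^ 2
        = L ^ 2 * ((r z) ^ 2 - 2 * ⟪pz z - x, pz z' - x⟫ + (r z') ^ 2) := by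
      rw [mul_pow, hpolar2]
    linarith [hpolar, hsq, h8]
  set s2 := ∑ z ∈ J, w z * (r z) ^ 2 with hs2
  have hsplit : ∀ z ∈ J, ∑ z' ∈ J, w z * w z' * ((t ^ 2 - L ^ 2) * ((r z) ^ 2 + (r z') ^ 2) / 2)
      = w z * ((t ^ 2 - L ^ 2) / 2) * ((r z) ^ 2 + s2) := by
    intro z hz
    have h1 : ∀ z' ∈ J, w z * w z' * ((t ^ 2 - L ^ 2) * ((r z) ^ 2 + (r z') ^ 2) / 2)
        = w z * ((t ^ 2 - L ^ 2) / 2) * (r z) ^ 2 * w z'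
          + w z * ((t ^ 2 - L ^ 2) / 2) * (w z' * (r z') ^ 2) := by
      intro z' _; ring
    rw [Finset.sum_congr rfl h1, Finset.sum_add_distrib, ← Finset.mul_sum, ← Finset.mul_sum,
      hw1, hs2]
    ring
  have hP : ∑ z ∈ J, ∑ z' ∈ J, w z * w z' * ((t ^ 2 - L ^ 2) * ((r z) ^ 2 + (r z') ^ 2) / 2)
      = (t ^ 2 - L ^ 2) * s2 := by
    rw [Finset.sum_congr rfl hsplit]
    have h1 : ∀ z ∈ J, w z * ((t ^ 2 - L ^ 2) / 2) * ((r z) ^ 2 + s2)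
        = ((t ^ 2 - L ^ 2) / 2) * (w z * (r z) ^ 2) + ((t ^ 2 - L ^ 2) / 2 * s2) * w z := by
      intro z _; ring
    rw [Finset.sum_congr rfl h1, Finset.sum_add_distrib, ← Finset.mul_sum, ← Finset.mul_sum,
      hw1, ← hs2]
    ring
  have hQ : ∑ z ∈ J, ∑ z' ∈ J, w z * w z' * (L ^ 2 * ⟪pz z - x, pz z' - x⟫)
      = L ^ 2 * ∑ z ∈ J, ∑ z' ∈ J, w z * w z' * ⟪pz z - x, pz z' - x⟫ := by
    rw [Finset.mul_sum]
    refine Finset.sum_congr rfl fun z hz => ?_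
    rw [Finset.mul_sum]
    refine Finset.sum_congr rfl fun z' _ => by ring
  have htotal : (t ^ 2 - L ^ 2) * s2 + L ^ 2 * ‖∑ z ∈ J, w z • (pz z - x)‖ ^ 2 ≤ 0 := by
    have hle : ∑ z ∈ J, ∑ z' ∈ J, w z * w z' * ((t ^ 2 - L ^ 2) * ((r z) ^ 2 + (r z') ^ 2) / 2
          + L ^ 2 * ⟪pz z - x, pz z' - x⟫)
        ≤ ∑ z ∈ J, ∑ z' ∈ J, w z * w z' * ⟪z - y₀, z' - y₀⟫ :=
      Finset.sum_le_sum fun z hz => Finset.sum_le_sum fun z' hz' => hterm z hz z' hz'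
    rw [e1] at hle
    have hsplit2 : ∑ z ∈ J, ∑ z' ∈ J, w z * w z' * ((t ^ 2 - L ^ 2) * ((r z) ^ 2 + (r z') ^ 2) / 2
          + L ^ 2 * ⟪pz z - x, pz z' - x⟫)
        = (t ^ 2 - L ^ 2) * s2 + L ^ 2 * ‖∑ z ∈ J, w z • (pz z - x)‖ ^ 2 := by
      calc ∑ z ∈ J, ∑ z' ∈ J, w z * w z' * ((t ^ 2 - L ^ 2) * ((r z) ^ 2 + (r z') ^ 2) / 2
              + L ^ 2 * ⟪pz z - x, pz z' - x⟫)
          = ∑ z ∈ J, (∑ z' ∈ J, w z * w z' * ((t ^ 2 - L ^ 2) * ((r z) ^ 2 + (r z') ^ 2) / 2)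
              + ∑ z' ∈ J, w z * w z' * (L ^ 2 * ⟪pz z - x, pz z' - x⟫)) := by
            refine Finset.sum_congr rfl fun z hz => ?_
            rw [← Finset.sum_add_distrib]
            exact Finset.sum_congr rfl fun z' _ => by ring
        _ = (t ^ 2 - L ^ 2) * s2 + L ^ 2 * ‖∑ z ∈ J, w z • (pz z - x)‖ ^ 2 := by
            rw [Finset.sum_add_distrib, hP, hQ, e2]
    rw [hsplit2] at hle
    exact hle
  obtain ⟨zs, hzs, hwzs⟩ : ∃ z ∈ J, 0 < w z := by
    by_contra h
    push_neg at h
    have : ∑ z ∈ J, w z = 0 :=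
      Finset.sum_eq_zero fun z hz => le_antisymm (h z hz) (hw0 z hz)
    rw [hw1] at this
    norm_num at this
  have hs2pos : 0 < s2 := by
    have h1 : w zs * (r zs) ^ 2 ≤ s2 :=
      Finset.single_le_sum (fun z hz => mul_nonneg (hw0 z hz) (sq_nonneg _)) hzs
    have h2 : 0 < w zs * (r zs) ^ 2 := mul_pos hwzs (pow_pos (hrpos zs hzs) 2)
    linarith
  clear_value g M ρ t I J pz r s2
  have htL2 : L ^ 2 < t ^ 2 := by nlinarith [htL, hL]
  nlinarith [htotal, hs2pos, htL2, sq_nonneg ‖∑ z ∈ J, w z • (pz z - x)‖]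

lemma kirszbraun_finset [DecidableEq F] (L : ℝ) (hL : 0 ≤ L) (S : Finset F) (f : F → G)
    (hf : ∀ p ∈ S, ∀ q ∈ S, dist (f p) (f q) ≤ L * dist p q) (T : Finset F) :
    ∃ g : F → G, (∀ p ∈ S, g p = f p) ∧
      ∀ p ∈ S ∪ T, ∀ q ∈ S ∪ T, dist (g p) (g q) ≤ L * dist p q := by
  classical
  induction T using Finset.induction_on with
  | empty => exact ⟨f, fun p _ => rfl, by simpa using hf⟩
  | @insert x T hx ih =>
    obtain ⟨g, hg1, hg2⟩ := ih
    by_cases hxST : x ∈ S ∪ T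
    · refine ⟨g, hg1, fun p hp q hq => ?_⟩
      have hins : S ∪ insert x T = S ∪ T := by
        rw [Finset.union_insert, Finset.insert_eq_self.2 hxST]
      rw [hins] at hp hq
      exact hg2 p hp q hq
    · obtain ⟨y, hy⟩ := kirszbraun_point L hL (S ∪ T) g hg2 x
      refine ⟨Function.update g x y, fun p hp => ?_, fun p hp q hq => ?_⟩
      · rw [Function.update_of_ne
          (ne_of_mem_of_not_mem (Finset.mem_union_left T hp) hxST), hg1 p hp]
      · rw [Finset.union_insert] at hp hq
        rcases Finset.mem_insert.1 hp with rfl | hp'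
        · rcases Finset.mem_insert.1 hq with rfl | hq'
          · simp [mul_nonneg hL dist_nonneg]
          · rw [Function.update_self,
              Function.update_of_ne (ne_of_mem_of_not_mem hq' hxST)]
            exact hy q hq'
        · rcases Finset.mem_insert.1 hq with rfl | hq'
          · rw [Function.update_self,
              Function.update_of_ne (ne_of_mem_of_not_mem hp' hxST), dist_comm,
              dist_comm p q]
            exact hy p hp'
          · rw [Function.update_of_ne (ne_of_mem_of_not_mem hp' hxST),
              Function.update_of_ne (ne_of_mem_of_not_mem hq' hxST)]
            exact hg2 p hp' q hq'

lemma net_exists {X : Type*} [MetricSpace X] [DecidableEq X] (α : ℝ) (hα : 0 < α)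
    (R : X → ℝ) (hR : ∀ x, 0 ≤ R x) :
    ∀ (n : ℕ) (s C : Finset X), s.card = n →
    (∀ c₁ ∈ C, ∀ c₂ ∈ C, c₁ ≠ c₂ → α * (R c₁ + R c₂) ≤ 2 * dist c₁ c₂) →
    (∀ c ∈ C, ∀ x ∈ s, R c ≤ R x) →
    ∃ C' : Finset X, C ⊆ C' ∧ C' ⊆ C ∪ s ∧
      (∀ c₁ ∈ C', ∀ c₂ ∈ C', c₁ ≠ c₂ → α * (R c₁ + R c₂) ≤ 2 * dist c₁ c₂) ∧
      (∀ x ∈ s, ∃ c ∈ C', dist x c ≤ α * R x ∧ R c ≤ R x) := by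
  intro n
  induction n with
  | zero =>
    intro s C hcard hsep hord
    rw [Finset.card_eq_zero] at hcard
    subst hcard
    exact ⟨C, Finset.Subset.refl C, Finset.subset_union_left, hsep, by simp⟩
  | succ n ih =>
    intro s C hcard hsep hord
    have hs : s.Nonempty := by rw [← Finset.card_pos, hcard]; omega
    obtain ⟨m, hm, hmin⟩ := s.exists_min_image R hs
    have hcard' : (s.erase m).card = n := by
      rw [Finset.card_erase_of_mem hm, hcard]
      omega
    by_cases hclose : ∃ c ∈ C, dist m c ≤ α * R m
    · obtain ⟨c₀, hc₀C, hc₀⟩ := hclose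
      obtain ⟨C', hCC', hC's, hsep', hcov'⟩ := ih (s.erase m) C hcard' hsep
        (fun c hc x hx => hord c hc x (Finset.mem_of_mem_erase hx))
      refine ⟨C', hCC', ?_, hsep', ?_⟩
      · intro z hz
        rcases Finset.mem_union.1 (hC's hz) with h | h
        · exact Finset.mem_union_left _ h
        · exact Finset.mem_union_right _ (Finset.mem_of_mem_erase h)
      · intro x hx
        by_cases hxm : x = m
        · subst hxm
          exact ⟨c₀, hCC' hc₀C, hc₀, hord c₀ hc₀C x hx⟩
        · exact hcov' x (Finset.mem_erase.2 ⟨hxm, hx⟩)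
    · push_neg at hclose
      have hsep2 : ∀ c₁ ∈ insert m C, ∀ c₂ ∈ insert m C, c₁ ≠ c₂ →
          α * (R c₁ + R c₂) ≤ 2 * dist c₁ c₂ := by
        intro c₁ h₁ c₂ h₂ hne
        rcases Finset.mem_insert.1 h₁ with rfl | h₁'
        · rcases Finset.mem_insert.1 h₂ with rfl | h₂'
          · exact absurd rfl hne
          · have h3 := hclose c₂ h₂'
            have h4 : R c₂ ≤ R c₁ := hord c₂ h₂' c₁ hm
            nlinarith [mul_le_mul_of_nonneg_left h4 (le_of_lt hα)]
        · rcases Finset.mem_insert.1 h₂ with rfl | h₂'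
          · have h3 := hclose c₁ h₁'
            have h4 : R c₁ ≤ R c₂ := hord c₁ h₁' c₂ hm
            rw [dist_comm] at h3
            nlinarith [mul_le_mul_of_nonneg_left h4 (le_of_lt hα)]
          · exact hsep c₁ h₁' c₂ h₂' hne
      have hord2 : ∀ c ∈ insert m C, ∀ x ∈ s.erase m, R c ≤ R x := by
        intro c hc x hx
        rcases Finset.mem_insert.1 hc with rfl | hc
        · exact hmin x (Finset.mem_of_mem_erase hx)
        · exact hord c hc x (Finset.mem_of_mem_erase hx)
      obtain ⟨C', hCC', hC's, hsep', hcov'⟩ := ih (s.erase m) (insert m C) hcard' hsep2 hord2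
      refine ⟨C', fun c hc => hCC' (Finset.mem_insert_of_mem hc), ?_, hsep', ?_⟩
      · intro z hz
        rcases Finset.mem_union.1 (hC's hz) with h | h
        · rcases Finset.mem_insert.1 h with rfl | h
          · exact Finset.mem_union_right _ hm
          · exact Finset.mem_union_left _ h
        · exact Finset.mem_union_right _ (Finset.mem_of_mem_erase h)
      · intro x hx
        by_cases hxm : x = m
        · subst hxm
          refine ⟨x, hCC' (Finset.mem_insert_self x C), ?_, le_refl _⟩
          rw [dist_self]
          exact mul_nonneg (le_of_lt hα) (hR x)
        · exact hcov' x (Finset.mem_erase.2 ⟨hxm, hx⟩)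

end KirszbraunAux

/-- Lemma `ψ`: given a finite metric space `X = A ∪ B` (`A`, `B` nonempty),
non-contracting embeddings `φ_A : A → ℝ^a`, `φ_B : B → ℝ^b` with Lipschitz
constants at most `D_A`, `D_B`, and `α > 0`, there is a map `ψ : X → ℝ^b` that
is `2(1+1/α)·D_A·D_B`-Lipschitz on `A`, coincides in distances with a
non-contracting `D_B`-Lipschitz embedding on `B`, and satisfies
`d(a,b) - (1+α)(2·D_A·D_B+1)·R_a ≤ ‖ψ(a)-ψ(b)‖ ≤ (2(1+α)·D_A·D_B+(2+α)·D_B)·d(a,b)`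
for `a ∈ A`, `b ∈ B`, where `R_a = d(a,B)`. -/
theorem exists_psi_map
    {X : Type*} [MetricSpace X] [Fintype X] (A B : Set X)
    (hAB : A ∪ B = Set.univ) (hA : A.Nonempty) (hB : B.Nonempty)
    (a b : ℕ) (DA DB α : ℝ) (hDA : 1 ≤ DA) (hDB : 1 ≤ DB) (hα : 0 < α)
    (φA : X → EuclideanSpace ℝ (Fin a))
    (hφA : ∀ x ∈ A, ∀ y ∈ A,
      dist x y ≤ dist (φA x) (φA y) ∧ dist (φA x) (φA y) ≤ DA * dist x y)
    (φB : X → EuclideanSpace ℝ (Fin b))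
    (hφB : ∀ x ∈ B, ∀ y ∈ B,
      dist x y ≤ dist (φB x) (φB y) ∧ dist (φB x) (φB y) ≤ DB * dist x y) :
    ∃ ψ : X → EuclideanSpace ℝ (Fin b),
      (∀ a₁ ∈ A, ∀ a₂ ∈ A,
        dist (ψ a₁) (ψ a₂) ≤ 2 * (1 + 1 / α) * DA * DB * dist a₁ a₂) ∧
      (∀ b₁ ∈ B, ∀ b₂ ∈ B,
        dist b₁ b₂ ≤ dist (ψ b₁) (ψ b₂) ∧ dist (ψ b₁) (ψ b₂) ≤ DB * dist b₁ b₂) ∧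
      (∀ x ∈ A, ∀ y ∈ B,
        dist x y - (1 + α) * (2 * DA * DB + 1) * Metric.infDist x B
            ≤ dist (ψ x) (ψ y) ∧
        dist (ψ x) (ψ y) ≤ (2 * (1 + α) * DA * DB + (2 + α) * DB) * dist x y) := by
  classical
  have hDA0 : (0:ℝ) < DA := lt_of_lt_of_le one_pos hDA
  have hDB0 : (0:ℝ) < DB := lt_of_lt_of_le one_pos hDB
  have hαinv : (0:ℝ) < 1 / α := by positivity
  set L' : ℝ := 2 * (1 + 1 / α) * DB with hL'def
  have hL'pos : 0 < L' := by
    rw [hL'def]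
    nlinarith [hαinv, hDB0]
  have hRnonneg : ∀ x : X, 0 ≤ Metric.infDist x B := fun x => Metric.infDist_nonneg
  -- nearest point projection onto B
  have hproj : ∀ x : X, ∃ p, p ∈ B ∧ dist x p = Metric.infDist x B := by
    intro x
    obtain ⟨p, hpB, hpmin⟩ := Set.exists_min_image B (fun p => dist x p) B.toFinite hB
    refine ⟨p, hpB, le_antisymm ?_ (Metric.infDist_le_dist_of_mem hpB)⟩
    haveI := hB.to_subtype
    rw [Metric.infDist_eq_iInf]
    exact le_ciInf fun y => hpmin y y.2
  choose π hπB hπd using hproj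
  have hπself : ∀ x ∈ B, π x = x := by
    intro x hx
    have h1 := hπd x
    rw [Metric.infDist_zero_of_mem hx] at h1
    exact (dist_eq_zero.1 h1).symm
  -- injectivity of φA on A
  have hφAinj : ∀ x ∈ A, ∀ y ∈ A, φA x = φA y → x = y := by
    intro x hx y hy h
    have h1 := (hφA x hx y hy).1
    rw [h, dist_self] at h1
    exact dist_le_zero.1 h1
  -- the greedy net N inside A
  obtain ⟨N, -, hNsub, hNsep, hNcov⟩ := net_exists α hα (fun x => Metric.infDist x B)
    hRnonneg A.toFinite.toFinset.card A.toFinite.toFinset ∅ rfl (by simp) (by simp)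
  have hNA : ∀ c ∈ N, c ∈ A := by
    intro c hc
    have h1 := hNsub hc
    rw [Finset.empty_union] at h1
    exact (Set.Finite.mem_toFinset _).1 h1
  have hsel : ∀ x ∈ A, ∃ c ∈ N, dist x c ≤ α * Metric.infDist x B ∧
      Metric.infDist c B ≤ Metric.infDist x B := by
    intro x hx
    exact hNcov x ((Set.Finite.mem_toFinset _).2 hx)
  choose sc hscN hscd hscR using hsel
  -- the finite sets in Euclidean space
  set S : Finset (EuclideanSpace ℝ (Fin a)) := N.image φA with hSdef
  set T : Finset (EuclideanSpace ℝ (Fin a)) := A.toFinite.toFinset.image φA with hTdef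
  have hpre : ∀ p ∈ S, ∃ c, c ∈ N ∧ φA c = p := by
    intro p hp
    obtain ⟨c, hc, h⟩ := Finset.mem_image.1 hp
    exact ⟨c, hc, h⟩
  choose pre hpreN hpreeq using hpre
  set f : EuclideanSpace ℝ (Fin a) → EuclideanSpace ℝ (Fin b) :=
    fun p => if h : p ∈ S then φB (π (pre p h)) else 0 with hfdef
  have hfc : ∀ c ∈ N, f (φA c) = φB (π c) := by
    intro c hc
    have hmem : φA c ∈ S := Finset.mem_image_of_mem φA hc
    have h1 : pre (φA c) hmem = c :=
      hφAinj _ (hNA _ (hpreN (φA c) hmem)) c (hNA c hc) (hpreeq (φA c) hmem)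
    simp only [hfdef, dif_pos hmem, h1]
  have hf : ∀ p ∈ S, ∀ q ∈ S, dist (f p) (f q) ≤ L' * dist p q := by
    intro p hp q hq
    have hc₁N := hpreN p hp
    have hc₂N := hpreN q hq
    set c₁ := pre p hp with hc₁def
    set c₂ := pre q hq with hc₂def
    have hc₁A := hNA _ hc₁N
    have hc₂A := hNA _ hc₂N
    have hfp : f p = φB (π c₁) := by
      have h1 := hfc c₁ hc₁N
      rwa [hpreeq p hp] at h1
    have hfq : f q = φB (π c₂) := by
      have h1 := hfc c₂ hc₂N
      rwa [hpreeq q hq] at h1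
    by_cases hcc : c₁ = c₂
    · have hpq : p = q := by
        rw [← hpreeq p hp, ← hpreeq q hq]
        exact congrArg φA hcc
      rw [hpq, dist_self]
      exact mul_nonneg (le_of_lt hL'pos) dist_nonneg
    · have hd1 : dist (f p) (f q) ≤ DB * dist (π c₁) (π c₂) := by
        rw [hfp, hfq]
        exact (hφB (π c₁) (hπB c₁) (π c₂) (hπB c₂)).2
      have hd2 : dist (π c₁) (π c₂)
          ≤ Metric.infDist c₁ B + dist c₁ c₂ + Metric.infDist c₂ B := by
        calc dist (π c₁) (π c₂) ≤ dist (π c₁) c₁ + dist c₁ (π c₂) := dist_triangle _ _ _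
          _ ≤ dist (π c₁) c₁ + (dist c₁ c₂ + dist c₂ (π c₂)) := by
              linarith [dist_triangle c₁ c₂ (π c₂)]
          _ = Metric.infDist c₁ B + dist c₁ c₂ + Metric.infDist c₂ B := by
              rw [dist_comm (π c₁) c₁, hπd c₁, hπd c₂]; ring
      have hd3 : α * (Metric.infDist c₁ B + Metric.infDist c₂ B) ≤ 2 * dist c₁ c₂ :=
        hNsep c₁ hc₁N c₂ hc₂N hcc
      have hd4 : dist c₁ c₂ ≤ dist p q := by
        have h1 := (hφA c₁ hc₁A c₂ hc₂A).1
        rwa [hpreeq p hp, hpreeq q hq] at h1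
      have hd3' : Metric.infDist c₁ B + Metric.infDist c₂ B ≤ 2 * dist c₁ c₂ / α := by
        rw [le_div_iff₀ hα]; linarith
      calc dist (f p) (f q)
          ≤ DB * (Metric.infDist c₁ B + dist c₁ c₂ + Metric.infDist c₂ B) :=
            le_trans hd1 (mul_le_mul_of_nonneg_left hd2 (le_of_lt hDB0))
        _ ≤ DB * (2 * dist c₁ c₂ / α + dist c₁ c₂) :=
            mul_le_mul_of_nonneg_left (by linarith) (le_of_lt hDB0)
        _ = DB * (2 / α + 1) * dist c₁ c₂ := by ring
        _ ≤ DB * (2 / α + 1) * dist p q := by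
            have hco : (0:ℝ) ≤ DB * (2 / α + 1) := by positivity
            exact mul_le_mul_of_nonneg_left hd4 hco
        _ ≤ L' * dist p q := by
            have hco2 : DB * (2 / α + 1) ≤ L' := by
              rw [hL'def]
              have h1 : DB * (2 / α + 1) = DB + 2 * DB * (1 / α) := by
                field_simp
                ring
              have h2 : 2 * (1 + 1 / α) * DB = 2 * DB + 2 * DB * (1 / α) := by ring
              rw [h1, h2]
              linarith [hDB0]
            exact mul_le_mul_of_nonneg_right hco2 dist_nonneg
  -- Kirszbraun extension
  obtain ⟨g, hgS, hgLip⟩ := kirszbraun_finset L' (le_of_lt hL'pos) S f hf T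
  have hmemT : ∀ x ∈ A, φA x ∈ S ∪ T := fun x hx =>
    Finset.mem_union_right _ (Finset.mem_image_of_mem φA ((Set.Finite.mem_toFinset _).2 hx))
  set ψ : X → EuclideanSpace ℝ (Fin b) := fun x => if x ∈ B then φB x else g (φA x)
    with hψdef
  have hψB : ∀ x ∈ B, ψ x = φB x := fun x hx => by simp only [hψdef, if_pos hx]
  have hgN : ∀ c ∈ N, g (φA c) = φB (π c) := by
    intro c hc
    rw [hgS (φA c) (Finset.mem_image_of_mem φA hc), hfc c hc]
  have hψA : ∀ x ∈ A, ψ x = g (φA x) := by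
    intro x hx
    by_cases hxB : x ∈ B
    · rw [hψB x hxB]
      have h1 : dist x (sc x hx) ≤ α * Metric.infDist x B := hscd x hx
      rw [Metric.infDist_zero_of_mem hxB, mul_zero] at h1
      have h2 : sc x hx = x := (dist_eq_zero.1 (le_antisymm h1 dist_nonneg)).symm
      have h3 : x ∈ N := h2 ▸ hscN x hx
      rw [hgN x h3, hπself x hxB]
    · simp only [hψdef, if_neg hxB]
  clear_value S T f ψ
  refine ⟨ψ, ?_, ?_, ?_⟩
  · -- (1) Lipschitz on A
    intro a₁ h₁ a₂ h₂
    rw [hψA a₁ h₁, hψA a₂ h₂]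
    calc dist (g (φA a₁)) (g (φA a₂)) ≤ L' * dist (φA a₁) (φA a₂) :=
          hgLip _ (hmemT a₁ h₁) _ (hmemT a₂ h₂)
      _ ≤ L' * (DA * dist a₁ a₂) :=
          mul_le_mul_of_nonneg_left (hφA a₁ h₁ a₂ h₂).2 (le_of_lt hL'pos)
      _ = 2 * (1 + 1 / α) * DA * DB * dist a₁ a₂ := by rw [hL'def]; ring
  · -- (2) isometry-type bounds on B
    intro b₁ h₁ b₂ h₂
    rw [hψB b₁ h₁, hψB b₂ h₂]
    exact hφB b₁ h₁ b₂ h₂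
  · -- (3) mixed bounds
    intro x hx y hy
    rw [hψA x hx, hψB y hy]
    have hcN : sc x hx ∈ N := hscN x hx
    set c := sc x hx with hcdef
    have hcA : c ∈ A := hNA c hcN
    have hcd : dist x c ≤ α * Metric.infDist x B := hscd x hx
    have hcR : Metric.infDist c B ≤ Metric.infDist x B := hscR x hx
    have hgc : g (φA c) = φB (π c) := hgN c hcN
    have e1 : dist (g (φA x)) (g (φA c)) ≤ L' * (DA * dist x c) :=
      le_trans (hgLip _ (hmemT x hx) _ (hmemT c hcA))
        (mul_le_mul_of_nonneg_left (hφA x hx c hcA).2 (le_of_lt hL'pos))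
    have hLα : L' * DA * α = 2 * (1 + α) * DA * DB := by
      rw [hL'def]
      field_simp
      ring
    have e1' : dist (g (φA x)) (g (φA c))
        ≤ 2 * (1 + α) * DA * DB * Metric.infDist x B := by
      have h1 : L' * (DA * dist x c) ≤ L' * (DA * (α * Metric.infDist x B)) := by
        have h2 : DA * dist x c ≤ DA * (α * Metric.infDist x B) :=
          mul_le_mul_of_nonneg_left hcd (le_of_lt hDA0)
        exact mul_le_mul_of_nonneg_left h2 (le_of_lt hL'pos)
      have h3 : L' * (DA * (α * Metric.infDist x B))
          = 2 * (1 + α) * DA * DB * Metric.infDist x B := by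
        rw [← hLα]; ring
      linarith [e1, h1]
    have e2u : dist (φB (π c)) (φB y) ≤ DB * dist (π c) y := (hφB (π c) (hπB c) y hy).2
    have e2l : dist (π c) y ≤ dist (φB (π c)) (φB y) := (hφB (π c) (hπB c) y hy).1
    have e3 : dist (π c) y ≤ Metric.infDist c B + dist x c + dist x y := by
      calc dist (π c) y ≤ dist (π c) c + dist c y := dist_triangle _ _ _
        _ ≤ dist (π c) c + (dist c x + dist x y) := by linarith [dist_triangle c x y]
        _ = Metric.infDist c B + dist x c + dist x y := by
            rw [dist_comm (π c) c, hπd c, dist_comm c x]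
            ring
    have e4 : dist x y - dist x c - Metric.infDist c B ≤ dist (π c) y := by
      have h5 := dist_triangle x c (π c)
      have h6 := dist_triangle x (π c) y
      have h7 : dist c (π c) = Metric.infDist c B := hπd c
      linarith
    have e5 : Metric.infDist x B ≤ dist x y := Metric.infDist_le_dist_of_mem hy
    constructor
    · -- lower bound
      have htri := dist_triangle (φB (π c)) (g (φA x)) (φB y)
      have hcomm : dist (φB (π c)) (g (φA x)) = dist (g (φA x)) (g (φA c)) := by
        rw [← hgc, dist_comm]
      rw [hcomm] at htri
      linarith [e1', e2l, e4, hcd, hcR, htri]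
    · -- upper bound
      have htri : dist (g (φA x)) (φB y)
          ≤ dist (g (φA x)) (g (φA c)) + dist (φB (π c)) (φB y) := by
        rw [← hgc]
        exact dist_triangle _ _ _
      have u2 : DB * dist (π c) y
          ≤ DB * (Metric.infDist c B + dist x c + dist x y) :=
        mul_le_mul_of_nonneg_left e3 (le_of_lt hDB0)
      have u3 : DB * Metric.infDist c B ≤ DB * Metric.infDist x B :=
        mul_le_mul_of_nonneg_left hcR (le_of_lt hDB0)
      have u4 : DB * dist x c ≤ DB * (α * Metric.infDist x B) :=
        mul_le_mul_of_nonneg_left hcd (le_of_lt hDB0)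
      have k1 : 2 * (1 + α) * DA * DB * Metric.infDist x B
          ≤ 2 * (1 + α) * DA * DB * dist x y := by
        have hco : (0:ℝ) ≤ 2 * (1 + α) * DA * DB := by
          have := mul_pos (mul_pos (by linarith : (0:ℝ) < 2 * (1 + α)) hDA0) hDB0
          linarith
        exact mul_le_mul_of_nonneg_left e5 hco
      have k2a : DB * Metric.infDist x B ≤ DB * dist x y :=
        mul_le_mul_of_nonneg_left e5 (le_of_lt hDB0)
      have k2b : DB * (α * Metric.infDist x B) ≤ DB * (α * dist x y) :=
        mul_le_mul_of_nonneg_left (mul_le_mul_of_nonneg_left e5 (le_of_lt hα))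
          (le_of_lt hDB0)
      linarith [htri, e1', e2u, u2, u3, u4, k1, k2a, k2b]
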